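/- Disaggregation theorem for commitment trajectories: any integer trajectory (u_t, y_t, z_t)_{t=1}^{T} with u_t ∈ {0,…,G}, y_t, z_t ∈ ℤ≥0, u_t − u_{t−1} = y_t − z_t, Σ_{i=t−TU+1}^{t} y_i ≤ u_t, and Σ_{i=t−TD+1}^{t} z_i ≤ G − u_t can be decomposed into G individual 0–1 trajectories (ũ_{g,t}) each satisfying the single-unit minimum up/down time constraints with y_t = Σ_g (ũ_{g,t}−ũ_{g,t−1})₊ and z_t = Σ_g (ũ_{g,t−1}−ũ_{g,t})₊ and u_t = Σ_g ũ_{g,t}. -/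

import Mathlib

/-- Number of integers `k ∈ [1,x]` with `k ≡ g+1 (mod G)`, as floor division. -/
def cnt (G g : ℕ) (x : ℤ) : ℤ := (x + G - 1 - g) / G

lemma cnt_zero {G g : ℕ} (hg : g < G) : cnt G g 0 = 0 := by
  unfold cnt
  apply Int.ediv_eq_zero_of_lt <;> omega

lemma cnt_mono {G : ℕ} (hG : 0 < G) (g : ℕ) {x x' : ℤ} (h : x ≤ x') :
    cnt G g x ≤ cnt G g x' := by
  unfold cnt
  exact Int.ediv_le_ediv (by exact_mod_cast hG) (by omega)

lemma cnt_add_G {G : ℕ} (hG : 0 < G) (g : ℕ) (x : ℤ) :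
    cnt G g (x + G) = cnt G g x + 1 := by
  unfold cnt
  rw [show (x + (G:ℤ) + G - 1 - g) = (x + G - 1 - g) + 1 * G by ring,
    Int.add_mul_ediv_right _ _ (by exact_mod_cast hG.ne' : (G:ℤ) ≠ 0)]

lemma sum_div_step {G : ℕ} (hG : 0 < G) (w : ℤ) :
    ∑ j ∈ Finset.range G, (w + 1 + (j:ℤ)) / (G:ℤ)
      = (∑ j ∈ Finset.range G, (w + (j:ℤ)) / (G:ℤ)) + 1 := by
  have hGz : (G:ℤ) ≠ 0 := by exact_mod_cast hG.ne'
  have h1 : ∀ j ∈ Finset.range G, (w + 1 + (j:ℤ)) / (G:ℤ)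
      = (fun j : ℕ => (w + (j:ℤ)) / (G:ℤ)) (j + 1) := by
    intro j _; congr 1; push_cast; ring
  rw [Finset.sum_congr rfl h1]
  have h2 := Finset.sum_range_succ' (fun j : ℕ => (w + (j:ℤ)) / (G:ℤ)) G
  have h3 := Finset.sum_range_succ (fun j : ℕ => (w + (j:ℤ)) / (G:ℤ)) G
  have h4 : (w + ((G:ℕ):ℤ)) / (G:ℤ) = (w + ((0:ℕ):ℤ)) / (G:ℤ) + 1 := by
    rw [show w + ((G:ℕ):ℤ) = (w + ((0:ℕ):ℤ)) + 1 * G by push_cast; ring,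
      Int.add_mul_ediv_right _ _ hGz]
  linarith [h2, h3, h4]

lemma sum_div_eq {G : ℕ} (hG : 0 < G) (x : ℤ) :
    ∑ j ∈ Finset.range G, (x + (j:ℤ)) / (G:ℤ) = x := by
  induction x using Int.induction_on with
  | zero =>
    apply Finset.sum_eq_zero
    intro j hj
    rw [Finset.mem_range] at hj
    apply Int.ediv_eq_zero_of_lt <;> omega
  | succ n ih =>
    have h := sum_div_step hG (n : ℤ)
    rw [h, ih]
  | pred n ih =>
    have h := sum_div_step hG (-(n:ℤ) - 1)
    have h1 : ∀ j ∈ Finset.range G, (-(n:ℤ) - 1 + 1 + (j:ℤ)) / (G:ℤ)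
        = (-(n:ℤ) + (j:ℤ)) / (G:ℤ) := by
      intro j _; congr 1; ring
    rw [Finset.sum_congr rfl h1, ih] at h
    linarith

lemma cnt_sum {G : ℕ} (hG : 0 < G) (x : ℤ) :
    ∑ g ∈ Finset.range G, cnt G g x = x := by
  have h : ∀ g ∈ Finset.range G, cnt G g x
      = (fun j : ℕ => (x + (j:ℤ)) / (G:ℤ)) (G - 1 - g) := by
    intro g hg
    rw [Finset.mem_range] at hg
    unfold cnt
    congr 1
    omega
  rw [Finset.sum_congr rfl h, Finset.sum_range_reflect (fun j : ℕ => (x + (j:ℤ)) / (G:ℤ)) G]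
  exact sum_div_eq hG x

lemma telescope_Icc (F : ℕ → ℤ) : ∀ t a : ℕ, a ≤ t →
    ∑ i ∈ Finset.Icc a t, (F i - F (i - 1)) = F t - F (a - 1) := by
  intro t
  induction t with
  | zero =>
    intro a ha
    interval_cases a
    simp
  | succ n ih =>
    intro a ha
    rcases Nat.lt_or_ge a (n + 1) with h | h
    · rw [Finset.sum_Icc_succ_top (by omega : a ≤ n + 1), ih a (by omega)]
      rw [show n + 1 - 1 = n from rfl]
      ring
    · have : a = n + 1 := by omega
      subst this
      rw [Finset.Icc_self, Finset.sum_singleton]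

theorem clustered_commitment_disaggregation (G T TU TD : ℕ)
    (hTU : 1 ≤ TU) (hTD : 1 ≤ TD)
    (u y z : ℕ → ℤ)
    (hu0 : u 0 = 0)
    (hu : ∀ t, 0 ≤ u t ∧ u t ≤ G)
    (hy : ∀ t, 0 ≤ y t) (hz : ∀ t, 0 ≤ z t)
    (hflow : ∀ t, 1 ≤ t → t ≤ T → u t - u (t - 1) = y t - z t)
    (hminup : ∀ t, 1 ≤ t → t ≤ T → ∑ i ∈ Finset.Icc (t + 1 - TU) t, y i ≤ u t)
    (hmindown : ∀ t, 1 ≤ t → t ≤ T → ∑ i ∈ Finset.Icc (t + 1 - TD) t, z i ≤ G - u t) :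
    ∃ ut : Fin G → ℕ → ℤ,
      (∀ g t, ut g t = 0 ∨ ut g t = 1) ∧
      (∀ g, ut g 0 = 0) ∧
      (∀ g t, 1 ≤ t → t ≤ T →
        ∑ i ∈ Finset.Icc (t + 1 - TU) t, max (ut g i - ut g (i - 1)) 0 ≤ ut g t) ∧
      (∀ g t, 1 ≤ t → t ≤ T →
        ∑ i ∈ Finset.Icc (t + 1 - TD) t, max (ut g (i - 1) - ut g i) 0 ≤ 1 - ut g t) ∧
      (∀ t, t ≤ T → u t = ∑ g, ut g t) ∧
      (∀ t, 1 ≤ t → t ≤ T → y t = ∑ g, max (ut g t - ut g (t - 1)) 0) ∧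
      (∀ t, 1 ≤ t → t ≤ T → z t = ∑ g, max (ut g (t - 1) - ut g t) 0) := by
  obtain hG0 | hG := Nat.eq_zero_or_pos G
  · -- degenerate case G = 0
    subst hG0
    have hu0' : ∀ t, u t = 0 := fun t => le_antisymm (by simpa using (hu t).2) (hu t).1
    refine ⟨fun g => g.elim0, fun g => g.elim0, fun g => g.elim0,
      fun g => g.elim0, fun g => g.elim0, ?_, ?_, ?_⟩
    · intro t _; simp [hu0' t]
    · intro t ht1 ht2
      have h := hminup t ht1 ht2
      have hmem : t ∈ Finset.Icc (t + 1 - TU) t := by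
        rw [Finset.mem_Icc]; omega
      have hle := Finset.single_le_sum (f := y) (fun i _ => hy i) hmem
      have h0 := hu0' t
      have : (∑ g : Fin 0, max (((fun (g : Fin 0) => g.elim0 : Fin 0 → ℕ → ℤ)) g t -
          ((fun (g : Fin 0) => g.elim0 : Fin 0 → ℕ → ℤ)) g (t-1)) 0) = 0 := by simp
      rw [this]
      linarith [hy t]
    · intro t ht1 ht2
      have h := hmindown t ht1 ht2
      have hmem : t ∈ Finset.Icc (t + 1 - TD) t := by
        rw [Finset.mem_Icc]; omega
      have hle := Finset.single_le_sum (f := z) (fun i _ => hz i) hmem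
      have h0 := hu0' t
      have : (∑ g : Fin 0, max (((fun (g : Fin 0) => g.elim0 : Fin 0 → ℕ → ℤ)) g (t-1) -
          ((fun (g : Fin 0) => g.elim0 : Fin 0 → ℕ → ℤ)) g t) 0) = 0 := by simp
      rw [this]
      have : ((0:ℕ):ℤ) = 0 := by norm_num
      rw [this] at h
      linarith [hz t]
  · -- main case G ≥ 1
    obtain ⟨Ys, hYs⟩ : ∃ f : ℕ → ℤ, ∀ s, f s = ∑ i ∈ Finset.Ioc 0 s, y i := ⟨_, fun _ => rfl⟩
    obtain ⟨Zs, hZs⟩ : ∃ f : ℕ → ℤ, ∀ s, f s = ∑ i ∈ Finset.Ioc 0 s, z i := ⟨_, fun _ => rfl⟩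
    have hYs0 : Ys 0 = 0 := by rw [hYs]; simp
    have hZs0 : Zs 0 = 0 := by rw [hZs]; simp
    have hYsplit : ∀ {s t : ℕ}, s ≤ t → Ys t = Ys s + ∑ i ∈ Finset.Ioc s t, y i := by
      intro s t hst
      rw [hYs, hYs, ← Finset.sum_Ioc_consecutive y (Nat.zero_le s) hst]
    have hZsplit : ∀ {s t : ℕ}, s ≤ t → Zs t = Zs s + ∑ i ∈ Finset.Ioc s t, z i := by
      intro s t hst
      rw [hZs, hZs, ← Finset.sum_Ioc_consecutive z (Nat.zero_le s) hst]
    have hYmono : ∀ {s t : ℕ}, s ≤ t → Ys s ≤ Ys t := by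
      intro s t hst
      rw [hYsplit hst]
      have : (0:ℤ) ≤ ∑ i ∈ Finset.Ioc s t, y i := Finset.sum_nonneg (fun i _ => hy i)
      linarith
    have hZmono : ∀ {s t : ℕ}, s ≤ t → Zs s ≤ Zs t := by
      intro s t hst
      rw [hZsplit hst]
      have : (0:ℤ) ≤ ∑ i ∈ Finset.Ioc s t, z i := Finset.sum_nonneg (fun i _ => hz i)
      linarith
    have hIocsingle : ∀ t : ℕ, 1 ≤ t → Finset.Ioc (t-1) t = {t} := by
      intro t ht
      ext i
      rw [Finset.mem_Ioc, Finset.mem_singleton]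
      omega
    have hYstep : ∀ t : ℕ, 1 ≤ t → Ys t = Ys (t - 1) + y t := by
      intro t ht
      rw [hYsplit (Nat.sub_le t 1), hIocsingle t ht, Finset.sum_singleton]
    have hZstep : ∀ t : ℕ, 1 ≤ t → Zs t = Zs (t - 1) + z t := by
      intro t ht
      rw [hZsplit (Nat.sub_le t 1), hIocsingle t ht, Finset.sum_singleton]
    have uYZ : ∀ t, t ≤ T → u t = Ys t - Zs t := by
      intro t
      induction t with
      | zero => intro _; rw [hYs0, hZs0, hu0]; ring
      | succ n ih =>
        intro h
        have hn := ih (by omega)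
        have hf := hflow (n+1) (by omega) h
        rw [show n + 1 - 1 = n from rfl] at hf
        have hYst := hYstep (n+1) (by omega)
        have hZst := hZstep (n+1) (by omega)
        rw [show n + 1 - 1 = n from rfl] at hYst hZst
        linarith
    have K1 : ∀ t, 1 ≤ t → t ≤ T → Zs t ≤ Ys (t - TU) := by
      intro t ht1 ht2
      have h := hminup t ht1 ht2
      have hsp := hYsplit (Nat.sub_le t TU)
      have hsub : ∑ i ∈ Finset.Ioc (t - TU) t, y i ≤ ∑ i ∈ Finset.Icc (t + 1 - TU) t, y i := by
        apply Finset.sum_le_sum_of_subset_of_nonneg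
        · intro i hi
          rw [Finset.mem_Ioc] at hi
          rw [Finset.mem_Icc]
          omega
        · intro i _ _; exact hy i
      have hu' := uYZ t ht2
      linarith
    have K2 : ∀ t, 1 ≤ t → t ≤ T → Ys t ≤ G + Zs (t - TD) := by
      intro t ht1 ht2
      have h := hmindown t ht1 ht2
      have hsp := hZsplit (Nat.sub_le t TD)
      have hsub : ∑ i ∈ Finset.Ioc (t - TD) t, z i ≤ ∑ i ∈ Finset.Icc (t + 1 - TD) t, z i := by
        apply Finset.sum_le_sum_of_subset_of_nonneg
        · intro i hi
          rw [Finset.mem_Ioc] at hi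
          rw [Finset.mem_Icc]
          omega
        · intro i _ _; exact hz i
      have hu' := uYZ t ht2
      linarith
    have ybd : ∀ t, 1 ≤ t → t ≤ T → y t ≤ G := by
      intro t ht1 ht2
      have h := hminup t ht1 ht2
      have hmem : t ∈ Finset.Icc (t + 1 - TU) t := by rw [Finset.mem_Icc]; omega
      have hle := Finset.single_le_sum (f := y) (fun i _ => hy i) hmem
      have := (hu t).2
      linarith
    have zbd : ∀ t, 1 ≤ t → t ≤ T → z t ≤ G := by
      intro t ht1 ht2
      have h := hmindown t ht1 ht2
      have hmem : t ∈ Finset.Icc (t + 1 - TD) t := by rw [Finset.mem_Icc]; omega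
      have hle := Finset.single_le_sum (f := z) (fun i _ => hz i) hmem
      have := (hu t).1
      linarith
    obtain ⟨F, hF⟩ : ∃ f : ℕ → ℕ → ℤ, ∀ g s, f g s = cnt G g (Ys (min s T)) :=
      ⟨_, fun _ _ => rfl⟩
    obtain ⟨H, hH⟩ : ∃ f : ℕ → ℕ → ℤ, ∀ g s, f g s = cnt G g (Zs (min s T)) :=
      ⟨_, fun _ _ => rfl⟩
    have hFt : ∀ g s, s ≤ T → F g s = cnt G g (Ys s) := by
      intro g s hs; rw [hF, min_eq_left hs]
    have hHt : ∀ g s, s ≤ T → H g s = cnt G g (Zs s) := by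
      intro g s hs; rw [hH, min_eq_left hs]
    have hbin : ∀ g s, 0 ≤ F g s - H g s ∧ F g s - H g s ≤ 1 := by
      intro g s
      have h1 := uYZ (min s T) (min_le_right s T)
      have h2 := hu (min s T)
      constructor
      · have hzy : Zs (min s T) ≤ Ys (min s T) := by linarith [h2.1]
        have := cnt_mono hG g hzy
        rw [hF, hH]; linarith
      · have hle : Ys (min s T) ≤ Zs (min s T) + G := by linarith [h2.2]
        have hm := cnt_mono hG g hle
        have h3 := cnt_add_G hG g (Zs (min s T))
        rw [hF, hH]; linarith
    have hjumpY : ∀ g i, 1 ≤ i → i ≤ T →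
        0 ≤ F g i - F g (i - 1) ∧ F g i - F g (i - 1) ≤ 1 := by
      intro g i h1 h2
      rw [hFt g i h2, hFt g (i-1) (by omega)]
      constructor
      · have := cnt_mono hG g (hYmono (Nat.sub_le i 1)); linarith
      · have hsy : Ys i ≤ Ys (i - 1) + G := by
          have := hYstep i h1
          have := ybd i h1 h2
          linarith
        have hm := cnt_mono hG g hsy
        have ha := cnt_add_G hG g (Ys (i - 1))
        linarith
    have hjumpZ : ∀ g i, 1 ≤ i → i ≤ T →
        0 ≤ H g i - H g (i - 1) ∧ H g i - H g (i - 1) ≤ 1 := by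
      intro g i h1 h2
      rw [hHt g i h2, hHt g (i-1) (by omega)]
      constructor
      · have := cnt_mono hG g (hZmono (Nat.sub_le i 1)); linarith
      · have hsz : Zs i ≤ Zs (i - 1) + G := by
          have := hZstep i h1
          have := zbd i h1 h2
          linarith
        have hm := cnt_mono hG g hsz
        have ha := cnt_add_G hG g (Zs (i - 1))
        linarith
    have hnosim : ∀ g i, 1 ≤ i → i ≤ T →
        (F g i - F g (i - 1)) + (H g i - H g (i - 1)) ≤ 1 := by
      intro g i h1 h2
      by_contra hc
      push_neg at hc
      have hFj := hjumpY g i h1 h2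
      have hHj := hjumpZ g i h1 h2
      have hF1 : F g i = F g (i - 1) + 1 := by omega
      have hH1 : H g i = H g (i - 1) + 1 := by omega
      have hk1 : Zs i ≤ Ys (i - 1) := le_trans (K1 i h1 h2) (hYmono (by omega))
      have hk2 : Ys i ≤ Zs (i - 1) + G := by
        have := K2 i h1 h2
        have := hZmono (show i - TD ≤ i - 1 by omega)
        linarith
      have e1 : H g i ≤ F g (i - 1) := by
        rw [hHt g i h2, hFt g (i-1) (by omega)]
        exact cnt_mono hG g hk1
      have e2 : F g i ≤ H g (i - 1) + 1 := by
        rw [hFt g i h2, hHt g (i-1) (by omega)]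
        calc cnt G g (Ys i) ≤ cnt G g (Zs (i - 1) + G) := cnt_mono hG g hk2
          _ = cnt G g (Zs (i - 1)) + 1 := cnt_add_G hG g _
      omega
    have hterm_up : ∀ g i, i ≤ T →
        max ((F g i - H g i) - (F g (i - 1) - H g (i - 1))) 0 = F g i - F g (i - 1) := by
      intro g i hiT
      rcases Nat.eq_zero_or_pos i with h0 | h1
      · subst h0
        rw [show (0:ℕ) - 1 = 0 from rfl]
        simp
      · have hFj := hjumpY g i h1 hiT
        have hHj := hjumpZ g i h1 hiT
        have hns := hnosim g i h1 hiT
        rcases le_total ((F g i - H g i) - (F g (i - 1) - H g (i - 1))) 0 with h | h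
        · rw [max_eq_right h]; omega
        · rw [max_eq_left h]; omega
    have hterm_down : ∀ g i, i ≤ T →
        max ((F g (i - 1) - H g (i - 1)) - (F g i - H g i)) 0 = H g i - H g (i - 1) := by
      intro g i hiT
      rcases Nat.eq_zero_or_pos i with h0 | h1
      · subst h0
        rw [show (0:ℕ) - 1 = 0 from rfl]
        simp
      · have hFj := hjumpY g i h1 hiT
        have hHj := hjumpZ g i h1 hiT
        have hns := hnosim g i h1 hiT
        rcases le_total ((F g (i - 1) - H g (i - 1)) - (F g i - H g i)) 0 with h | h
        · rw [max_eq_right h]; omega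
        · rw [max_eq_left h]; omega
    refine ⟨fun g t => F g.val t - H g.val t, ?_, ?_, ?_, ?_, ?_, ?_, ?_⟩
    · -- binary
      intro g t
      have := hbin g.val t
      dsimp only
      omega
    · -- initial
      intro g
      dsimp only
      rw [hF, hH, show (0 ⊓ T) = 0 by omega, hYs0, hZs0, cnt_zero g.isLt, sub_self]
    · -- min up
      intro g t ht1 ht2
      dsimp only
      have hcongr : ∀ i ∈ Finset.Icc (t + 1 - TU) t,
          max ((F g.val i - H g.val i) - (F g.val (i - 1) - H g.val (i - 1))) 0
            = F g.val i - F g.val (i - 1) := by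
        intro i hi
        rw [Finset.mem_Icc] at hi
        exact hterm_up g.val i (by omega)
      rw [Finset.sum_congr rfl hcongr,
        telescope_Icc (F g.val) t (t + 1 - TU) (by omega)]
      have heq : t + 1 - TU - 1 = t - TU := by omega
      rw [heq]
      have hle : H g.val t ≤ F g.val (t - TU) := by
        rw [hHt g.val t ht2, hFt g.val (t - TU) (by omega)]
        exact cnt_mono hG g.val (K1 t ht1 ht2)
      linarith
    · -- min down
      intro g t ht1 ht2
      dsimp only
      have hcongr : ∀ i ∈ Finset.Icc (t + 1 - TD) t,
          max ((F g.val (i - 1) - H g.val (i - 1)) - (F g.val i - H g.val i)) 0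
            = H g.val i - H g.val (i - 1) := by
        intro i hi
        rw [Finset.mem_Icc] at hi
        exact hterm_down g.val i (by omega)
      rw [Finset.sum_congr rfl hcongr,
        telescope_Icc (H g.val) t (t + 1 - TD) (by omega)]
      have heq : t + 1 - TD - 1 = t - TD := by omega
      rw [heq]
      have hle : F g.val t ≤ H g.val (t - TD) + 1 := by
        rw [hFt g.val t ht2, hHt g.val (t - TD) (by omega)]
        have hk2 : Ys t ≤ Zs (t - TD) + (G:ℤ) := by linarith [K2 t ht1 ht2]
        calc cnt G g.val (Ys t) ≤ cnt G g.val (Zs (t - TD) + G) :=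
              cnt_mono hG g.val hk2
          _ = cnt G g.val (Zs (t - TD)) + 1 := cnt_add_G hG g.val _
      linarith
    · -- commitment sum
      intro t ht
      dsimp only
      have hsum : ∑ g : Fin G, (F g.val t - H g.val t) = Ys t - Zs t := by
        rw [Fin.sum_univ_eq_sum_range (fun g => F g t - H g t) G,
          Finset.sum_congr rfl (fun g _ => by rw [hFt g t ht, hHt g t ht]),
          Finset.sum_sub_distrib, cnt_sum hG, cnt_sum hG]
      rw [hsum]
      exact uYZ t ht
    · -- startups sum
      intro t ht1 ht2
      dsimp only
      have hcongr : ∀ g ∈ (Finset.univ : Finset (Fin G)),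
          max ((F g.val t - H g.val t) - (F g.val (t - 1) - H g.val (t - 1))) 0
            = F g.val t - F g.val (t - 1) := fun g _ => hterm_up g.val t ht2
      rw [Finset.sum_congr rfl hcongr]
      have hsum : ∑ g : Fin G, (F g.val t - F g.val (t - 1)) = Ys t - Ys (t - 1) := by
        rw [Fin.sum_univ_eq_sum_range (fun g => F g t - F g (t - 1)) G,
          Finset.sum_congr rfl
            (fun g _ => by rw [hFt g t ht2, hFt g (t - 1) (show t - 1 ≤ T by omega)]),
          Finset.sum_sub_distrib, cnt_sum hG, cnt_sum hG]
      rw [hsum]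
      have := hYstep t ht1
      linarith
    · -- shutdowns sum
      intro t ht1 ht2
      dsimp only
      have hcongr : ∀ g ∈ (Finset.univ : Finset (Fin G)),
          max ((F g.val (t - 1) - H g.val (t - 1)) - (F g.val t - H g.val t)) 0
            = H g.val t - H g.val (t - 1) := fun g _ => hterm_down g.val t ht2
      rw [Finset.sum_congr rfl hcongr]
      have hsum : ∑ g : Fin G, (H g.val t - H g.val (t - 1)) = Zs t - Zs (t - 1) := by
        rw [Fin.sum_univ_eq_sum_range (fun g => H g t - H g (t - 1)) G,
          Finset.sum_congr rfl
            (fun g _ => by rw [hHt g t ht2, hHt g (t - 1) (show t - 1 ≤ T by omega)]),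
          Finset.sum_sub_distrib, cnt_sum hG, cnt_sum hG]
      rw [hsum]
      have := hZstep t ht1
      linarith
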